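/- The universal Novikov ring Λ, consisting of formal sums Σ_{r∈ℝ} a_r T^r with real coefficients a_r such that for every c ∈ ℝ the set {r ≤ c : a_r ≠ 0} is finite, with pointwise addition and convolution multiplication, is a field. -/

import Mathlib

/-- The Novikov condition: for every `c : ℝ`, only finitely many exponents
`r ≤ c` have nonzero coefficient. -/
def NovikovCond (f : ℝ → ℝ) : Prop :=
  ∀ c : ℝ, {r : ℝ | f r ≠ 0 ∧ r ≤ c}.Finite

/-- The underlying set of the universal Novikov ring over `ℝ`. -/
def Novikov : Type := {f : ℝ → ℝ // NovikovCond f}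

/-- Convolution product of coefficient functions. -/
noncomputable def conv (f g : ℝ → ℝ) : ℝ → ℝ :=
  fun r => ∑ᶠ s : ℝ, f s * g (r - s)

/- ### Auxiliary material -/

lemma NovikovCond.isPWO {f : ℝ → ℝ} (hf : NovikovCond f) :
    (Function.support f).IsPWO := by
  rw [Set.isPWO_iff_isWF, Set.isWF_iff_no_descending_seq]
  intro g hg hmem
  have hsub : Set.range g ⊆ {r : ℝ | f r ≠ 0 ∧ r ≤ g 0} := by
    rintro r ⟨n, rfl⟩
    exact ⟨hmem n, hg.antitone (Nat.zero_le n)⟩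
  have : (Set.range g).Finite := (hf (g 0)).subset hsub
  exact Set.infinite_range_of_injective hg.injective this

lemma NovikovCond.exists_lb {f : ℝ → ℝ} (hf : NovikovCond f) :
    ∃ b : ℝ, ∀ r, f r ≠ 0 → b ≤ r := by
  by_cases h : ∃ a, f a ≠ 0
  · obtain ⟨a, ha⟩ := h
    obtain ⟨b, hb, hmin⟩ :=
      Set.exists_min_image _ id (hf a) ⟨a, ha, le_refl a⟩
    refine ⟨b, fun r hr => ?_⟩
    by_cases hra : r ≤ a
    · exact hmin r ⟨hr, hra⟩
    · exact le_trans hb.2 (le_of_not_ge hra)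
  · exact ⟨0, fun r hr => absurd ⟨r, hr⟩ h⟩

lemma NovikovCond.mul {x y : HahnSeries ℝ ℝ} (hx : NovikovCond x.coeff)
    (hy : NovikovCond y.coeff) : NovikovCond (x * y).coeff := by
  obtain ⟨bx, hbx⟩ := hx.exists_lb
  obtain ⟨by', hby⟩ := hy.exists_lb
  intro c
  refine Set.Finite.subset (Set.Finite.image2 (· + ·) (hx (c - by')) (hy (c - bx))) ?_
  rintro r ⟨hr, hrc⟩
  have hr' : r ∈ (x * y).support := hr
  obtain ⟨s, hs, t, ht, hst⟩ := HahnSeries.support_mul_subset hr'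
  rw [HahnSeries.mem_support] at hs ht
  have hst' : s + t = r := hst
  exact ⟨s, ⟨hs, by have := hbx s hs; have := hby t ht; linarith⟩,
    t, ⟨ht, by have := hbx s hs; have := hby t ht; linarith⟩, hst⟩

lemma conv_eq_mul_coeff {x y : HahnSeries ℝ ℝ} :
    (x * y).coeff = conv x.coeff y.coeff := by
  funext r
  classical
  set T := Finset.antidiagonal x.isPWO_support y.isPWO_support r with hT
  have hsupp : (Function.support fun s => x.coeff s * y.coeff (r - s)) ⊆
      ↑(T.image Prod.fst) := by
    intro s hs
    have hxs : x.coeff s ≠ 0 := left_ne_zero_of_mul hs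
    have hys : y.coeff (r - s) ≠ 0 := right_ne_zero_of_mul hs
    have : ((s, r - s) : ℝ × ℝ) ∈ T := by
      rw [hT, Finset.mem_antidiagonal]
      exact ⟨hxs, hys, by ring⟩
    exact Finset.mem_coe.mpr (Finset.mem_image.mpr ⟨(s, r - s), this, rfl⟩)
  have h1 : conv x.coeff y.coeff r = ∑ s ∈ T.image Prod.fst, x.coeff s * y.coeff (r - s) :=
    finsum_eq_finset_sum_of_support_subset _ hsupp
  have hinj : ∀ p ∈ T, ∀ q ∈ T, p.1 = q.1 → p = q := by
    intro p hp q hq hpq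
    rw [Finset.mem_antidiagonal] at hp hq
    have : p.2 = q.2 := by
      have h1 := hp.2.2; have h2 := hq.2.2; rw [hpq] at h1; linarith
    exact Prod.ext hpq this
  have h2 : ∑ s ∈ T.image Prod.fst, x.coeff s * y.coeff (r - s) =
      ∑ p ∈ T, x.coeff p.1 * y.coeff (r - p.1) := Finset.sum_image hinj
  rw [HahnSeries.coeff_mul, h1, h2]
  refine Finset.sum_congr rfl fun p hp => ?_
  rw [Finset.mem_antidiagonal] at hp
  have : p.2 = r - p.1 := by linarith [hp.2.2]
  rw [this]

/-- The key analytic lemma: the (Hahn series) inverse of a nonzero Novikov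
series is again Novikov. -/
lemma inv_novikov {x y : HahnSeries ℝ ℝ} (hx : NovikovCond x.coeff) (hx0 : x ≠ 0)
    (hxy : x * y = 1) : NovikovCond y.coeff := by
  classical
  have hy0 : y ≠ 0 := by
    rintro rfl
    rw [mul_zero] at hxy
    exact zero_ne_one hxy
  set r0 := x.order with hr0
  have ha : x.coeff r0 ≠ 0 := HahnSeries.coeff_order_eq_zero.not.mpr hx0
  have horder : y.order = -r0 := by
    have h := HahnSeries.order_mul hx0 hy0
    rw [hxy, HahnSeries.order_one] at h
    linarith [h.symm]
  -- Step 1 : support of y is contained in [-r0, ∞)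
  have hlow : ∀ r : ℝ, r < -r0 → y.coeff r = 0 := by
    intro r hr
    exact HahnSeries.coeff_eq_zero_of_lt_order (by rw [horder]; exact hr)
  -- Step 2 : uniform gap ε above the order of x
  obtain ⟨ε, hε, hεs⟩ : ∃ ε : ℝ, 0 < ε ∧ ∀ s, x.coeff s ≠ 0 → s ≠ r0 → r0 + ε ≤ s := by
    by_cases h : ∃ s, x.coeff s ≠ 0 ∧ s ≠ r0
    · obtain ⟨a, ha', har⟩ := h
      have hfin : ({s : ℝ | x.coeff s ≠ 0 ∧ s ≤ a} \ {r0}).Finite := (hx a).diff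
      obtain ⟨m, hm, hmin⟩ :=
        Set.exists_min_image _ id hfin ⟨a, ⟨⟨ha', le_refl a⟩, har⟩⟩
      have hmr0 : r0 < m := by
        have h1 : r0 ≤ m := by
          by_contra hcon
          exact hm.1.1 (HahnSeries.coeff_eq_zero_of_lt_order
            (show m < x.order from lt_of_not_ge hcon))
        exact lt_of_le_of_ne h1 (fun h => hm.2 h.symm)
      refine ⟨m - r0, by linarith, fun s hs hsr => ?_⟩
      by_cases hsa : s ≤ a
      · have := hmin s ⟨⟨hs, hsa⟩, hsr⟩
        simp only [id] at this
        linarith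
      · have : m ≤ a := hm.1.2
        linarith
    · exact ⟨1, one_pos, fun s hs hsr => absurd ⟨s, hs, hsr⟩ h⟩
  -- Step 3 : recursion for nonzero coefficients of y
  have hrec : ∀ r : ℝ, r ≠ -r0 → y.coeff r ≠ 0 →
      ∃ s, x.coeff s ≠ 0 ∧ s ≠ r0 ∧ y.coeff (r + r0 - s) ≠ 0 := by
    intro r hr hyr
    have h0 : (x * y).coeff (r + r0) = 0 := by
      rw [hxy, HahnSeries.coeff_one, if_neg (by intro h; apply hr; linarith)]
    rw [HahnSeries.coeff_mul] at h0
    set T := Finset.antidiagonal x.isPWO_support y.isPWO_support (r + r0) with hT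
    have hmem : ((r0, r) : ℝ × ℝ) ∈ T := by
      rw [hT, Finset.mem_antidiagonal]
      exact ⟨ha, hyr, by ring⟩
    by_contra hcon
    push_neg at hcon
    have hothers : ∀ ij ∈ T, ij ≠ ((r0, r) : ℝ × ℝ) →
        x.coeff ij.1 * y.coeff ij.2 = 0 := by
      intro ij hij hne
      rw [Finset.mem_antidiagonal] at hij
      by_contra hne0
      have hs : x.coeff ij.1 ≠ 0 := left_ne_zero_of_mul hne0
      have ht : y.coeff ij.2 ≠ 0 := right_ne_zero_of_mul hne0
      have hsum : ij.1 + ij.2 = r + r0 := hij.2.2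
      have h1 : ij.1 ≠ r0 := by
        intro h
        apply hne
        exact Prod.ext h (by rw [h] at hsum; linarith)
      have h2 : ij.2 = r + r0 - ij.1 := by linarith
      exact ht (by rw [h2]; exact hcon ij.1 hs h1)
    have := Finset.sum_eq_single_of_mem ((r0, r) : ℝ × ℝ) hmem hothers
    rw [h0] at this
    exact mul_ne_zero ha hyr this.symm
  -- Step 4 : induction
  have key : ∀ n : ℕ, ∀ c : ℝ, c ≤ -r0 + n * ε →
      {r : ℝ | y.coeff r ≠ 0 ∧ r ≤ c}.Finite := by
    intro n
    induction n with
    | zero =>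
      intro c hc
      refine Set.Finite.subset (Set.finite_singleton (-r0)) ?_
      rintro r ⟨h1, h2⟩
      have hge : -r0 ≤ r := by
        by_contra hcon
        exact h1 (hlow r (lt_of_not_ge hcon))
      have : r ≤ -r0 := by
        simp only [Nat.cast_zero, zero_mul, add_zero] at hc
        linarith
      exact le_antisymm this hge
    | succ n ih =>
      intro c hc
      have hc' : c - ε ≤ -r0 + n * ε := by push_cast at hc ⊢; linarith
      have h1 : {r : ℝ | y.coeff r ≠ 0 ∧ r ≤ c - ε}.Finite := ih _ hc'
      have h2 : {s : ℝ | x.coeff s ≠ 0 ∧ s ≤ c + 2 * r0}.Finite := hx _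
      refine Set.Finite.subset
        ((Set.finite_singleton (-r0)).union
          (Set.Finite.image2 (fun t s => t + (s - r0)) h1 h2)) ?_
      rintro r ⟨hyr, hrc⟩
      by_cases hr : r = -r0
      · exact Or.inl hr
      · obtain ⟨s, hs, hsr0, ht⟩ := hrec r hr hyr
        have hsε : r0 + ε ≤ s := hεs s hs hsr0
        have htlow : -r0 ≤ r + r0 - s := by
          by_contra hcon
          exact ht (hlow _ (lt_of_not_ge hcon))
        refine Or.inr ⟨r + r0 - s, ⟨ht, by linarith⟩, s, ⟨hs, by linarith⟩, by ring⟩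
  intro c
  obtain ⟨n, hn⟩ := Archimedean.arch (c + r0) hε
  refine key n c ?_
  rw [nsmul_eq_mul] at hn
  linarith

/-- The Novikov ring, realized as a subring of the Hahn series field. -/
noncomputable def novikovSubring : Subring (HahnSeries ℝ ℝ) where
  carrier := {x | NovikovCond x.coeff}
  zero_mem' := by
    intro c
    refine Set.Finite.subset (Set.finite_empty) ?_
    rintro r ⟨h1, _⟩
    exact absurd rfl h1
  one_mem' := by
    intro c
    refine Set.Finite.subset (Set.finite_singleton 0) ?_
    rintro r ⟨h1, _⟩
    rw [HahnSeries.coeff_one] at h1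
    by_contra h
    simp only [Set.mem_singleton_iff] at h
    rw [if_neg h] at h1
    exact h1 rfl
  add_mem' := by
    intro a b ha hb c
    refine Set.Finite.subset ((ha c).union (hb c)) ?_
    rintro r ⟨h1, h2⟩
    rw [HahnSeries.coeff_add] at h1
    by_cases hA : a.coeff r = 0
    · exact Or.inr ⟨by intro h; rw [hA, h, add_zero] at h1; exact h1 rfl, h2⟩
    · exact Or.inl ⟨hA, h2⟩
  neg_mem' := by
    intro a ha c
    refine Set.Finite.subset (ha c) ?_
    rintro r ⟨h1, h2⟩
    rw [HahnSeries.coeff_neg] at h1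
    exact ⟨fun h => h1 (by rw [h, neg_zero]), h2⟩
  mul_mem' := fun ha hb => NovikovCond.mul ha hb

lemma novikov_isField : IsField novikovSubring := by
  constructor
  · exact ⟨0, 1, zero_ne_one⟩
  · exact mul_comm
  · intro a ha
    have hx0 : (a : HahnSeries ℝ ℝ) ≠ 0 := by
      intro h
      exact ha (Subtype.ext h)
    have hxy : (a : HahnSeries ℝ ℝ) * (a : HahnSeries ℝ ℝ)⁻¹ = 1 :=
      mul_inv_cancel₀ hx0
    have hy : NovikovCond ((a : HahnSeries ℝ ℝ)⁻¹).coeff :=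
      inv_novikov a.2 hx0 hxy
    refine ⟨⟨(a : HahnSeries ℝ ℝ)⁻¹, hy⟩, ?_⟩
    exact Subtype.ext hxy

noncomputable instance : Field novikovSubring := novikov_isField.toField

/-- The equivalence between `Novikov` and the Novikov subring of Hahn series. -/
def novikovEquiv : Novikov ≃ novikovSubring where
  toFun f := ⟨⟨f.1, f.2.isPWO⟩, f.2⟩
  invFun z := ⟨z.1.coeff, z.2⟩
  left_inv f := rfl
  right_inv z := rfl

/-- The universal Novikov ring, with pointwise addition and convolution
multiplication, is a field. -/
theorem novikov_is_field :
    ∃ F : Field Novikov,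
      (∀ f g : Novikov, (F.add f g).1 = fun r => f.1 r + g.1 r) ∧
      (∀ f g : Novikov, (F.mul f g).1 = conv f.1 g.1) := by
  refine ⟨novikovEquiv.field, ?_, ?_⟩
  · intro f g
    show (novikovEquiv.symm (novikovEquiv f + novikovEquiv g)).1 = _
    rfl
  · intro f g
    show (novikovEquiv.symm (novikovEquiv f * novikovEquiv g)).1 = _
    exact conv_eq_mul_coeff
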